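/- arXiv:2504.15772 — 4 statements merged into one kernel-verified Lean document; each statement's English description precedes it below -/
import Mathlib

section
/- Let G be a connected graph on n vertices with maximum degree Δ ≥ 1. Then μ₁(G) = Δ + 1 if and only if Δ = n − 1. -/
open scoped Classical

/-- The multiset of Laplacian eigenvalues of a finite simple graph, with multiplicity
(the Laplacian matrix `L = D - A` is real symmetric, hence Hermitian). -/

noncomputable def lapEigs {V : Type*} [Fintype V] (G : SimpleGraph V) : Multiset ℝ :=
  Finset.univ.val.map (SimpleGraph.posSemidef_lapMatrix ℝ G).1.eigenvalues

/-- Laplacian eigenvalues sorted in non-decreasing order. -/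

noncomputable def lapEigsAsc {V : Type*} [Fintype V] (G : SimpleGraph V) : List ℝ :=
  (lapEigs G).sort (· ≤ ·)

/-- `lapMu G k` is the `k`-th largest Laplacian eigenvalue of `G` (1-indexed),
so `lapMu G 1 ≥ lapMu G 2 ≥ ⋯ ≥ lapMu G n`. -/
noncomputable def lapMu {V : Type*} [Fintype V] (G : SimpleGraph V) (k : ℕ) : ℝ :=
  (lapEigsAsc G).getD (Fintype.card V - k) 0

/-- `lapCount G I` is the number of Laplacian eigenvalues of `G` (with multiplicity)
lying in the set `I ⊆ ℝ`. -/

noncomputable def lapCount {V : Type*} [Fintype V] (G : SimpleGraph V) (I : Set ℝ) : ℕ :=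
  ((lapEigs G).filter (· ∈ I)).card


open Matrix Finset

open Matrix in
lemma eig_le_of_quad_le' {n : ℕ} {A : Matrix (Fin n) (Fin n) ℝ} (hA : A.IsHermitian) {c : ℝ}
    (h : ∀ x : Fin n → ℝ, x ⬝ᵥ (A *ᵥ x) ≤ c * (x ⬝ᵥ x)) (i : Fin n) : hA.eigenvalues i ≤ c := by
  set v : Fin n → ℝ := ⇑(hA.eigenvectorBasis i) with hv
  have hAv : A *ᵥ v = hA.eigenvalues i • v := hA.mulVec_eigenvectorBasis i
  have hv0 : v ≠ 0 := by
    intro h0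
    have := hA.eigenvectorBasis.orthonormal.1 i
    rw [hv] at h0
    rw [show (hA.eigenvectorBasis i : EuclideanSpace ℝ (Fin n)) = 0 from
      (by ext j; exact congrFun h0 j)] at this
    simp at this
  have hvv : 0 < v ⬝ᵥ v := by
    have := dotProduct_self_star_pos_iff (v := v)
    simpa using this.mpr hv0
  have := h v
  rw [hAv, dotProduct_smul, smul_eq_mul] at this
  exact le_of_mul_le_mul_right (by linarith) hvv

open Matrix in
lemma quad_le_of_eig_le' {n : ℕ} {A : Matrix (Fin n) (Fin n) ℝ} (hA : A.IsHermitian) {c : ℝ}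
    (h : ∀ i, hA.eigenvalues i ≤ c) (x : Fin n → ℝ) : x ⬝ᵥ (A *ᵥ x) ≤ c * (x ⬝ᵥ x) := by
  have hU := (Matrix.mem_unitaryGroup_iff).mp (hA.eigenvectorUnitary).2
  have hdecomp : c • (1 : Matrix (Fin n) (Fin n) ℝ) - A =
      (hA.eigenvectorUnitary : Matrix (Fin n) (Fin n) ℝ) *
        Matrix.diagonal (fun i => c - hA.eigenvalues i) *
        (star (hA.eigenvectorUnitary : Matrix (Fin n) (Fin n) ℝ)) := by
    conv_lhs => rw [hA.spectral_theorem]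
    have h1 : c • (1 : Matrix (Fin n) (Fin n) ℝ) =
        (hA.eigenvectorUnitary : Matrix (Fin n) (Fin n) ℝ) * (c • 1) *
        (star (hA.eigenvectorUnitary : Matrix (Fin n) (Fin n) ℝ)) := by
      rw [Matrix.mul_smul, mul_one, Matrix.smul_mul, hU]
    rw [h1, Unitary.conjStarAlgAut_apply, ← Matrix.sub_mul, ← Matrix.mul_sub]
    congr 2
    rw [Matrix.smul_one_eq_diagonal, Matrix.diagonal_sub]
    rfl
  have hP : (c • (1 : Matrix (Fin n) (Fin n) ℝ) - A).PosSemidef := by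
    rw [hdecomp]
    exact (Matrix.posSemidef_diagonal_iff.mpr fun i =>
      sub_nonneg.mpr (h i)).mul_mul_conjTranspose_same _
  have := hP.dotProduct_mulVec_nonneg x
  simp only [star_trivial, Matrix.sub_mulVec, dotProduct_sub, Matrix.smul_mulVec,
    Matrix.one_mulVec, dotProduct_smul, smul_eq_mul, RCLike.re_to_real] at this
  linarith

lemma lapMatrix_irrel {n : ℕ} (G : SimpleGraph (Fin n)) (d1 d2 : DecidableRel G.Adj)
    (e1 e2 : DecidableEq (Fin n)) :
    @SimpleGraph.lapMatrix (Fin n) ℝ _ G d1 e1 _ = @SimpleGraph.lapMatrix (Fin n) ℝ _ G d2 e2 _ := by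
  have h1 : d1 = d2 := by funext a b; exact Subsingleton.elim _ _
  have h2 : e1 = e2 := by funext a b; exact Subsingleton.elim _ _
  subst h1; subst h2; rfl

lemma eigenvalues_congr {n : ℕ} {A B : Matrix (Fin n) (Fin n) ℝ} (hAB : A = B)
    {hA : A.IsHermitian} {hB : B.IsHermitian} (i : Fin n) :
    hA.eigenvalues i = hB.eigenvalues i := by
  subst hAB; rfl

lemma lapEigs_eq {n : ℕ} (G : SimpleGraph (Fin n)) [DecidableRel G.Adj] :
    lapEigs G = Finset.univ.val.map (SimpleGraph.posSemidef_lapMatrix ℝ G).1.eigenvalues := by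
  rw [lapEigs]
  refine Multiset.map_congr rfl fun i _ => ?_
  congr 1
  · exact lapMatrix_irrel G _ _ _ _

open Matrix in
lemma lap_quad_eq {n : ℕ} (G : SimpleGraph (Fin n)) [DecidableRel G.Adj] (x : Fin n → ℝ) :
    x ⬝ᵥ (G.lapMatrix ℝ *ᵥ x) =
      (∑ i : Fin n, ∑ j : Fin n, if G.Adj i j then (x i - x j)^2 else 0) / 2 := by
  rw [← Matrix.toLinearMap₂'_apply', SimpleGraph.lapMatrix_toLinearMap₂']

open Matrix in
lemma lap_quad_le_card {n : ℕ} (G : SimpleGraph (Fin n)) [DecidableRel G.Adj] (x : Fin n → ℝ) :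
    x ⬝ᵥ (G.lapMatrix ℝ *ᵥ x) ≤ (n : ℝ) * (x ⬝ᵥ x) := by
  rw [lap_quad_eq]
  have h1 : ∑ i : Fin n, ∑ j : Fin n, (if G.Adj i j then (x i - x j)^2 else 0)
      ≤ ∑ i : Fin n, ∑ j : Fin n, (x i - x j)^2 := by
    refine Finset.sum_le_sum fun i _ => Finset.sum_le_sum fun j _ => ?_
    split
    · exact le_refl _
    · positivity
  have h2 : ∑ i : Fin n, ∑ j : Fin n, (x i - x j)^2
      = 2 * n * (∑ i, x i ^ 2) - 2 * (∑ i, x i)^2 := by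
    simp_rw [sub_sq, Finset.sum_add_distrib, Finset.sum_sub_distrib, Finset.sum_const,
      Finset.card_univ, Fintype.card_fin, nsmul_eq_mul, ← Finset.mul_sum, ← Finset.sum_mul]
    have e1 : ∑ i : Fin n, 2 * x i = 2 * ∑ i : Fin n, x i := by rw [Finset.mul_sum]
    rw [e1]; ring
  have h3 : x ⬝ᵥ x = ∑ i, x i ^ 2 := by
    simp [dotProduct, sq]
  rw [h3]
  nlinarith [sq_nonneg (∑ i, x i), h1, h2]

lemma lapMu_spec {V : Type*} [Fintype V] (hn : 0 < Fintype.card V) (G : SimpleGraph V) :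
    lapMu G 1 ∈ lapEigs G ∧ ∀ a ∈ lapEigs G, a ≤ lapMu G 1 := by
  have hcard : Multiset.card (lapEigs G) = Fintype.card V := by
    simp [lapEigs]
  have hlen : (lapEigsAsc G).length = Fintype.card V := by
    rw [lapEigsAsc, Multiset.length_sort, hcard]
  have hidx : Fintype.card V - 1 < (lapEigsAsc G).length := by omega
  have hget : lapMu G 1 = (lapEigsAsc G).get ⟨Fintype.card V - 1, hidx⟩ := by
    simp [lapMu, List.getD_eq_getElem?_getD, List.getElem?_eq_getElem hidx]
  constructor
  · rw [hget, ← Multiset.mem_sort (α := ℝ) (r := (· ≤ ·)) (s := lapEigs G)]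
    exact List.get_mem (lapEigsAsc G) _
  · intro a ha
    have hmem : a ∈ lapEigsAsc G := by rwa [lapEigsAsc, Multiset.mem_sort]
    obtain ⟨k, hk⟩ := List.mem_iff_get.mp hmem
    rw [hget, ← hk]
    exact ((lapEigs G).pairwise_sort (· ≤ ·)).rel_get_of_le
      (Fin.le_def.mpr (by simpa using Nat.le_sub_one_of_lt (hlen ▸ k.isLt)) :
        k ≤ ⟨Fintype.card V - 1, hidx⟩)

open Matrix in
lemma lapEigs_le_of_quad_le {n : ℕ} (G : SimpleGraph (Fin n)) [DecidableRel G.Adj] {c : ℝ}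
    (h : ∀ x : Fin n → ℝ, x ⬝ᵥ (G.lapMatrix ℝ *ᵥ x) ≤ c * (x ⬝ᵥ x)) :
    ∀ a ∈ lapEigs G, a ≤ c := by
  intro a ha
  rw [lapEigs_eq, Multiset.mem_map] at ha
  obtain ⟨i, -, rfl⟩ := ha
  exact eig_le_of_quad_le' _ h i

open Matrix in
lemma quad_le_of_lapEigs_le {n : ℕ} (G : SimpleGraph (Fin n)) [DecidableRel G.Adj] {c : ℝ}
    (h : ∀ a ∈ lapEigs G, a ≤ c) (x : Fin n → ℝ) :
    x ⬝ᵥ (G.lapMatrix ℝ *ᵥ x) ≤ c * (x ⬝ᵥ x) := by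
  refine quad_le_of_eig_le' ((SimpleGraph.posSemidef_lapMatrix ℝ G).1) (fun i => ?_) x
  exact h _ (by rw [lapEigs_eq, Multiset.mem_map]; exact ⟨i, Finset.mem_univ_val i, rfl⟩)


open Matrix Finset in
lemma sum_pat1 {n : ℕ} (G : SimpleGraph (Fin n)) [DecidableRel G.Adj] (v : Fin n) (c : ℝ) :
    ∑ i : Fin n, ∑ j : Fin n, (if i = v ∧ G.Adj i j then c else 0)
      = (G.degree v : ℝ) * c := by
  have h1 : ∀ i : Fin n, ∑ j : Fin n, (if i = v ∧ G.Adj i j then c else 0)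
      = if i = v then ∑ j : Fin n, (if G.Adj v j then c else 0) else 0 := by
    intro i
    by_cases h : i = v
    · subst h; simp
    · simp [h]
  simp_rw [h1]
  rw [Finset.sum_eq_single_of_mem v (Finset.mem_univ v) (fun u _ h => if_neg h), if_pos rfl,
    G.degree_eq_sum_if_adj (R := ℝ) v, Finset.sum_mul]
  refine Finset.sum_congr rfl fun j _ => ?_
  by_cases h : G.Adj v j <;> simp [h]

open Matrix Finset in
lemma sum_pat2 {n : ℕ} (G : SimpleGraph (Fin n)) [DecidableRel G.Adj] (v : Fin n) (c : ℝ) :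
    ∑ i : Fin n, ∑ j : Fin n, (if j = v ∧ G.Adj i j then c else 0)
      = (G.degree v : ℝ) * c := by
  rw [Finset.sum_comm]
  have h1 : ∀ j : Fin n, ∑ i : Fin n, (if j = v ∧ G.Adj i j then c else 0)
      = if j = v then ∑ i : Fin n, (if G.Adj v i then c else 0) else 0 := by
    intro j
    by_cases h : j = v
    · subst h
      simp only [true_and, if_true]
      refine Finset.sum_congr rfl fun i _ => ?_
      exact if_congr (G.adj_comm _ _) rfl rfl
    · simp [h]
  simp_rw [h1]
  rw [Finset.sum_eq_single_of_mem v (Finset.mem_univ v) (fun u _ h => if_neg h), if_pos rfl,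
    G.degree_eq_sum_if_adj (R := ℝ) v, Finset.sum_mul]
  refine Finset.sum_congr rfl fun j _ => ?_
  by_cases h : G.Adj v j <;> simp [h]

open Matrix Finset in
lemma sum_pat3 {n : ℕ} (a b : Fin n) (hab : a ≠ b) :
    ∑ i : Fin n, ∑ j : Fin n, (if (i = a ∧ j = b) ∨ (i = b ∧ j = a) then (1:ℝ) else 0) = 2 := by
  have hdisj : ∀ i j : Fin n, (if (i = a ∧ j = b) ∨ (i = b ∧ j = a) then (1:ℝ) else 0)
      = (if i = a ∧ j = b then (1:ℝ) else 0) + (if i = b ∧ j = a then (1:ℝ) else 0) := by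
    intro i j
    by_cases h1 : i = a ∧ j = b <;> by_cases h2 : i = b ∧ j = a
    · exact absurd (h1.1.symm.trans h2.1) hab
    · rw [if_pos (Or.inl h1), if_pos h1, if_neg h2]; norm_num
    · rw [if_pos (Or.inr h2), if_neg h1, if_pos h2]; norm_num
    · rw [if_neg (by tauto), if_neg h1, if_neg h2]; norm_num
  simp_rw [hdisj, Finset.sum_add_distrib]
  have key : ∀ (p q : Fin n), ∑ i : Fin n, ∑ j : Fin n, (if i = p ∧ j = q then (1:ℝ) else 0) = 1 := by
    intro p q
    have h1 : ∀ i : Fin n, (∑ j : Fin n, if i = p ∧ j = q then (1:ℝ) else 0)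
        = if i = p then (∑ j : Fin n, if j = q then (1:ℝ) else 0) else 0 := by
      intro i; by_cases h : i = p <;> simp [h]
    simp_rw [h1]
    rw [Finset.sum_eq_single_of_mem p (Finset.mem_univ p) (fun u _ h => if_neg h), if_pos rfl,
      Finset.sum_eq_single_of_mem q (Finset.mem_univ q) (fun u _ h => if_neg h), if_pos rfl]
  rw [key a b, key b a]
  norm_num

open Matrix Finset in
lemma lap_quad_star_lower {n : ℕ} (G : SimpleGraph (Fin n)) [DecidableRel G.Adj] (v : Fin n)
    (x : Fin n → ℝ) (hxv : x v = (G.degree v : ℝ)) (hxnb : ∀ u, G.Adj v u → x u = -1) :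
    (G.degree v : ℝ) * ((G.degree v : ℝ) + 1)^2 ≤ x ⬝ᵥ (G.lapMatrix ℝ *ᵥ x) := by
  set d : ℝ := (G.degree v : ℝ) with hd
  set c : ℝ := (d + 1)^2 with hc
  rw [lap_quad_eq]
  have hpoint : ∀ i j : Fin n,
      (if i = v ∧ G.Adj i j then c else 0) + (if j = v ∧ G.Adj i j then c else 0)
        ≤ (if G.Adj i j then (x i - x j)^2 else 0) := by
    intro i j
    by_cases hadj : G.Adj i j
    · simp only [hadj, and_true, if_true]
      by_cases h1 : i = v
      · have hjv : ¬ (j = v) := fun h => G.irrefl (by rw [h1, h] at hadj; exact hadj)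
        rw [if_pos h1, if_neg hjv, h1, hxv, hxnb j (h1 ▸ hadj)]
        rw [hc]; nlinarith [sq_nonneg (d+1)]
      · by_cases h2 : j = v
        · rw [if_neg h1, if_pos h2, h2, hxv, hxnb i (h2 ▸ hadj.symm)]
          rw [hc]; nlinarith [sq_nonneg (d+1)]
        · rw [if_neg h1, if_neg h2]
          simpa using sq_nonneg (x i - x j)
    · have e1 : ¬ (i = v ∧ G.Adj i j) := fun h => hadj h.2
      have e2 : ¬ (j = v ∧ G.Adj i j) := fun h => hadj h.2
      rw [if_neg e1, if_neg e2, if_neg hadj]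
      norm_num
  calc d * c = (d * c + d * c) / 2 := by ring
    _ = (∑ i : Fin n, ∑ j : Fin n, ((if i = v ∧ G.Adj i j then c else 0)
          + (if j = v ∧ G.Adj i j then c else 0))) / 2 := by
        simp_rw [Finset.sum_add_distrib]
        rw [sum_pat1 G v c, sum_pat2 G v c]
    _ ≤ (∑ i : Fin n, ∑ j : Fin n, if G.Adj i j then (x i - x j)^2 else 0) / 2 := by
        exact div_le_div_of_nonneg_right
          (Finset.sum_le_sum fun i _ => Finset.sum_le_sum fun j _ => hpoint i j) (by norm_num)

open Matrix Finset in
lemma lap_quad_star_lower_strong {n : ℕ} (G : SimpleGraph (Fin n)) [DecidableRel G.Adj]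
    (v a b : Fin n) (x : Fin n → ℝ)
    (hxv : x v = (G.degree v : ℝ)) (hxnb : ∀ u, G.Adj v u → x u = -1)
    (hx0 : ∀ u, u ≠ v → ¬ G.Adj v u → x u = 0)
    (hab : G.Adj a b) (hva : G.Adj v a) (hbv : b ≠ v) (hvb : ¬ G.Adj v b) :
    (G.degree v : ℝ) * ((G.degree v : ℝ) + 1)^2 + 1 ≤ x ⬝ᵥ (G.lapMatrix ℝ *ᵥ x) := by
  set d : ℝ := (G.degree v : ℝ) with hd
  set c : ℝ := (d + 1)^2 with hc
  have hav : a ≠ v := fun h => G.irrefl (h ▸ hva)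
  have hxa : x a = -1 := hxnb a hva
  have hxb : x b = 0 := hx0 b hbv hvb
  rw [lap_quad_eq]
  have hpoint : ∀ i j : Fin n,
      (if i = v ∧ G.Adj i j then c else 0) + (if j = v ∧ G.Adj i j then c else 0)
        + (if (i = a ∧ j = b) ∨ (i = b ∧ j = a) then (1:ℝ) else 0)
        ≤ (if G.Adj i j then (x i - x j)^2 else 0) := by
    intro i j
    by_cases hadj : G.Adj i j
    · simp only [hadj, and_true, if_true]
      by_cases h1 : i = v
      · have hjv : ¬ (j = v) := fun h => G.irrefl (by rw [h1, h] at hadj; exact hadj)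
        have hex : ¬ ((i = a ∧ j = b) ∨ (i = b ∧ j = a)) := by
          rintro (⟨rfl, rfl⟩ | ⟨rfl, rfl⟩)
          · exact hav h1
          · exact hbv h1
        rw [if_pos h1, if_neg hjv, if_neg hex, h1, hxv, hxnb j (h1 ▸ hadj)]
        rw [hc]; nlinarith [sq_nonneg (d+1)]
      · by_cases h2 : j = v
        · have hex : ¬ ((i = a ∧ j = b) ∨ (i = b ∧ j = a)) := by
            rintro (⟨rfl, rfl⟩ | ⟨rfl, rfl⟩)
            · exact hbv h2
            · exact hav h2
          rw [if_neg h1, if_pos h2, if_neg hex, h2, hxv, hxnb i (h2 ▸ hadj.symm)]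
          rw [hc]; nlinarith [sq_nonneg (d+1)]
        · rw [if_neg h1, if_neg h2]
          by_cases h3 : (i = a ∧ j = b) ∨ (i = b ∧ j = a)
          · rcases h3 with ⟨rfl, rfl⟩ | ⟨rfl, rfl⟩
            · rw [if_pos (Or.inl ⟨rfl, rfl⟩), hxa, hxb]; norm_num
            · rw [if_pos (Or.inr ⟨rfl, rfl⟩), hxb, hxa]; norm_num
          · rw [if_neg h3]
            simpa using sq_nonneg (x i - x j)
    · have e1 : ¬ (i = v ∧ G.Adj i j) := fun h => hadj h.2
      have e2 : ¬ (j = v ∧ G.Adj i j) := fun h => hadj h.2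
      have e3 : ¬ ((i = a ∧ j = b) ∨ (i = b ∧ j = a)) := by
        rintro (⟨rfl, rfl⟩ | ⟨rfl, rfl⟩)
        · exact hadj hab
        · exact hadj hab.symm
      rw [if_neg e1, if_neg e2, if_neg e3, if_neg hadj]
      norm_num
  calc d * c + 1 = (d * c + d * c + 2) / 2 := by ring
    _ = (∑ i : Fin n, ∑ j : Fin n, ((if i = v ∧ G.Adj i j then c else 0)
          + (if j = v ∧ G.Adj i j then c else 0)
          + (if (i = a ∧ j = b) ∨ (i = b ∧ j = a) then (1:ℝ) else 0))) / 2 := by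
        simp_rw [Finset.sum_add_distrib]
        rw [sum_pat1 G v c, sum_pat2 G v c, sum_pat3 a b hab.ne]
    _ ≤ (∑ i : Fin n, ∑ j : Fin n, if G.Adj i j then (x i - x j)^2 else 0) / 2 := by
        exact div_le_div_of_nonneg_right
          (Finset.sum_le_sum fun i _ => Finset.sum_le_sum fun j _ => hpoint i j) (by norm_num)


/-- For a connected graph `G` on `n` vertices with maximum degree `Δ ≥ 1`,
`μ₁(G) = Δ + 1` if and only if `Δ = n − 1`. -/
theorem maxEig_eq_maxDegree_add_one_iff {n : ℕ} (G : SimpleGraph (Fin n))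
    [DecidableRel G.Adj] (hconn : G.Connected) (hΔ : 1 ≤ G.maxDegree) :
    lapMu G 1 = (G.maxDegree : ℝ) + 1 ↔ G.maxDegree = n - 1 := by
  have hne : Nonempty (Fin n) := hconn.nonempty
  have hn : 0 < n := by simpa using Fintype.card_pos_iff.mpr hne
  obtain ⟨v, hv⟩ := G.exists_maximal_degree_vertex
  obtain ⟨hmem, hmax⟩ := lapMu_spec (by simpa using hn) G
  have hquadle : ∀ y : Fin n → ℝ, y ⬝ᵥ (G.lapMatrix ℝ *ᵥ y) ≤ lapMu G 1 * (y ⬝ᵥ y) :=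
    quad_le_of_lapEigs_le G hmax
  have hμn : lapMu G 1 ≤ n := lapEigs_le_of_quad_le G (lap_quad_le_card G) _ hmem
  have hΔn : G.maxDegree ≤ n - 1 := by
    have := G.degree_lt_card_verts v
    rw [Fintype.card_fin] at this
    omega
  set x : Fin n → ℝ := fun u => if u = v then (G.degree v : ℝ) else if G.Adj v u then -1 else 0
    with hxdef
  have hxv : x v = (G.degree v : ℝ) := by simp [hxdef]
  have hxnb : ∀ u, G.Adj v u → x u = -1 := by
    intro u hu
    have h1 : u ≠ v := fun h => G.irrefl (h ▸ hu)
    simp [hxdef, h1, hu]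
  have hx0 : ∀ u, u ≠ v → ¬ G.Adj v u → x u = 0 := by
    intro u h1 h2; simp [hxdef, h1, h2]
  have hxx : x ⬝ᵥ x = (G.degree v : ℝ) * ((G.degree v : ℝ) + 1) := by
    have h0 : ∀ u : Fin n, x u * x u
        = if u = v then (G.degree v : ℝ) * (G.degree v : ℝ) else if G.Adj v u then 1 else 0 := by
      intro u
      by_cases h1 : u = v
      · rw [h1, hxv]; simp
      · by_cases h2 : G.Adj v u
        · rw [hxnb u h2]; simp [h1, h2]
        · rw [hx0 u h1 h2]; simp [h1, h2]
    rw [dotProduct]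
    simp_rw [h0]
    rw [← Finset.add_sum_erase Finset.univ _ (Finset.mem_univ v), if_pos rfl]
    have h2 : ∑ u ∈ Finset.univ.erase v,
        (if u = v then (G.degree v : ℝ) * (G.degree v : ℝ) else if G.Adj v u then 1 else 0)
        = ∑ u ∈ Finset.univ.erase v, (if G.Adj v u then (1:ℝ) else 0) := by
      refine Finset.sum_congr rfl fun u hu => ?_
      rw [if_neg (Finset.ne_of_mem_erase hu)]
    have h3 : (∑ u ∈ Finset.univ.erase v, if G.Adj v u then (1:ℝ) else 0)
        = ∑ u : Fin n, if G.Adj v u then (1:ℝ) else 0 :=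
      Finset.sum_erase _ (by simp)
    rw [h2, h3, ← G.degree_eq_sum_if_adj (R := ℝ) v]
    ring
  have hd1 : (1:ℝ) ≤ (G.degree v : ℝ) := by
    have : 1 ≤ G.degree v := hv ▸ hΔ
    exact_mod_cast this
  have hμlow : (G.degree v : ℝ) + 1 ≤ lapMu G 1 := by
    have hlow := lap_quad_star_lower G v x hxv hxnb
    have hub := hquadle x
    rw [hxx] at hub
    have hdd : (0:ℝ) < (G.degree v : ℝ) * ((G.degree v : ℝ) + 1) := by nlinarith
    have h1 : (G.degree v : ℝ) * ((G.degree v : ℝ) + 1)^2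
        = ((G.degree v : ℝ) + 1) * ((G.degree v : ℝ) * ((G.degree v : ℝ) + 1)) := by ring
    exact le_of_mul_le_mul_right (by linarith) hdd
  constructor
  · intro hμ
    by_contra hne'
    have hΔlt : G.maxDegree < n - 1 := lt_of_le_of_ne hΔn hne'
    set S : Finset (Fin n) := insert v (G.neighborFinset v) with hS
    have hcardS : S.card ≤ G.degree v + 1 := by
      exact Finset.card_insert_le v (G.neighborFinset v)
    obtain ⟨w, hw⟩ : ∃ w, w ∉ S := by
      by_contra hall
      push_neg at hall
      have hsub : (Finset.univ : Finset (Fin n)) ⊆ S := fun u _ => hall u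
      have := Finset.card_le_card hsub
      rw [Finset.card_univ, Fintype.card_fin] at this
      have hdeg : G.degree v = G.maxDegree := hv.symm
      omega
    obtain ⟨p⟩ := hconn.preconnected v w
    obtain ⟨dart, -, hd1', hd2'⟩ := p.exists_boundary_dart (↑S)
      (Finset.mem_coe.mpr (Finset.mem_insert_self v _)) (fun h => hw (Finset.mem_coe.mp h))
    have hadj : G.Adj dart.fst dart.snd := dart.adj
    have haS : dart.fst ∈ S := Finset.mem_coe.mp hd1'
    have hbS : dart.snd ∉ S := fun h => hd2' (Finset.mem_coe.mpr h)
    have hbv : dart.snd ≠ v := fun h => hbS (h ▸ Finset.mem_insert_self v _)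
    have hvb : ¬ G.Adj v dart.snd := fun h =>
      hbS (Finset.mem_insert_of_mem ((SimpleGraph.mem_neighborFinset G v dart.snd).mpr h))
    have hva : G.Adj v dart.fst := by
      rcases Finset.mem_insert.mp haS with h | h
      · exact absurd (h ▸ hadj) hvb
      · exact (SimpleGraph.mem_neighborFinset G v dart.fst).mp h
    have hstrong := lap_quad_star_lower_strong G v dart.fst dart.snd x hxv hxnb hx0 hadj hva hbv hvb
    have hub := hquadle x
    rw [hxx, hμ, hv] at hub
    nlinarith
  · intro hΔeq
    have hcast : (G.maxDegree : ℝ) + 1 = n := by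
      have h' : G.maxDegree + 1 = n := by omega
      exact_mod_cast h'
    rw [← hv] at hμlow
    linarith
end

section
/- For any simple graph G, the largest Laplacian eigenvalue satisfies μ₁(G) ≤ max over edges uv of (d(u) + d(v) − |N(u) ∩ N(v)|), where the maximum is over all edges uv of G (assume G has at least one edge). -/
open scoped Classical
open Finset Matrix

lemma das_key {V : Type*} [Fintype V] [DecidableEq V]
    (G : SimpleGraph V) [DecidableRel G.Adj]
    (hE : ((Finset.univ ×ˢ Finset.univ).filter
      (fun p : V × V => G.Adj p.1 p.2)).Nonempty)
    (μ : ℝ) (x : V → ℝ) (hx : x ≠ 0)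
    (hev : G.lapMatrix ℝ *ᵥ x = μ • x) :
    μ ≤ ((Finset.univ ×ˢ Finset.univ).filter (fun p : V × V => G.Adj p.1 p.2)).sup' hE
        (fun p => (G.degree p.1 + G.degree p.2 : ℝ) -
          ((G.neighborFinset p.1 ∩ G.neighborFinset p.2).card : ℝ)) := by
  set F := (Finset.univ ×ˢ Finset.univ).filter (fun p : V × V => G.Adj p.1 p.2) with hF
  set f : V × V → ℝ := fun p => (G.degree p.1 + G.degree p.2 : ℝ) -
          ((G.neighborFinset p.1 ∩ G.neighborFinset p.2).card : ℝ) with hf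
  -- the value of f at any adjacent pair is at least 1
  have hf_ge : ∀ p : V × V, G.Adj p.1 p.2 → (1 : ℝ) ≤ f p := by
    rintro ⟨u, v⟩ huv
    dsimp only at huv ⊢
    have hsub : G.neighborFinset u ∩ G.neighborFinset v ⊆ (G.neighborFinset u).erase v := by
      intro w hw
      simp only [mem_inter, SimpleGraph.mem_neighborFinset] at hw
      exact mem_erase.2 ⟨fun h => (G.loopless.irrefl v (h ▸ hw.2)), by
        simpa [SimpleGraph.mem_neighborFinset] using hw.1⟩
    have hcard : (G.neighborFinset u ∩ G.neighborFinset v).card + 1 ≤ G.degree u := by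
      have h1 := Finset.card_le_card hsub
      have hv : v ∈ G.neighborFinset u := (SimpleGraph.mem_neighborFinset _ _ _).2 huv
      have h2 := Finset.card_erase_of_mem hv
      have hdeg : (G.neighborFinset u).card = G.degree u := G.card_neighborFinset_eq_degree u
      rw [h2, hdeg] at h1
      have hd1 : 1 ≤ G.degree u := by
        rw [← hdeg]; exact Finset.card_pos.2 ⟨v, hv⟩
      omega
    have hdv : 1 ≤ G.degree v := by
      have : u ∈ G.neighborFinset v := (SimpleGraph.mem_neighborFinset _ _ _).2 huv.symm
      have := Finset.card_pos.2 ⟨u, this⟩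
      rwa [G.card_neighborFinset_eq_degree] at this
    have h1 : ((G.neighborFinset u ∩ G.neighborFinset v).card : ℝ) + 1 ≤ G.degree u := by
      exact_mod_cast hcard
    have h2 : (1 : ℝ) ≤ G.degree v := by exact_mod_cast hdv
    simp only [hf]
    linarith
  obtain ⟨p₀, hp₀⟩ := hE
  have hp₀adj : G.Adj p₀.1 p₀.2 := (Finset.mem_filter.1 hp₀).2
  have hS1 : (1 : ℝ) ≤ F.sup' hE f := le_trans (hf_ge p₀ hp₀adj) (Finset.le_sup' f hp₀)
  rcases le_or_gt μ 0 with hμ | hμ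
  · linarith
  -- now μ > 0 : the eigenvector is orthogonal to the all-ones vector
  have hsum : ∑ v, x v = 0 := by
    have h0 : ∑ v, (G.lapMatrix ℝ *ᵥ x) v = 0 := by
      have : (fun _ => (1:ℝ)) ⬝ᵥ (G.lapMatrix ℝ *ᵥ x) = 0 := by
        rw [Matrix.dotProduct_mulVec, ← Matrix.mulVec_transpose,
          (SimpleGraph.isSymm_lapMatrix ℝ G).eq, G.lapMatrix_mulVec_const_eq_zero]
        simp [dotProduct]
      simpa [dotProduct] using this
    rw [hev] at h0
    have : μ * ∑ v, x v = 0 := by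
      rw [← h0, Finset.mul_sum]; simp [mul_comm]
    exact (mul_eq_zero.1 this).resolve_left (ne_of_gt hμ)
  -- take u maximizing x
  have hVne : (Finset.univ : Finset V).Nonempty := ⟨p₀.1, mem_univ _⟩
  obtain ⟨u, -, hu⟩ := Finset.exists_max_image Finset.univ x hVne
  have hu' : ∀ w, x w ≤ x u := fun w => hu w (mem_univ w)
  have hxu : 0 < x u := by
    by_contra h
    push_neg at h
    have hall : ∀ w ∈ Finset.univ, x w ≤ 0 := fun w _ => le_trans (hu' w) h
    have := (Finset.sum_eq_zero_iff_of_nonpos hall).1 hsum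
    exact hx (funext fun w => this w (mem_univ w))
  have hLu : μ * x u = G.degree u * x u - ∑ w ∈ G.neighborFinset u, x w := by
    have := congrFun hev u
    rw [SimpleGraph.lapMatrix_mulVec_apply] at this
    simpa using this.symm
  have hNu : (G.neighborFinset u).Nonempty := by
    by_contra h
    rw [Finset.not_nonempty_iff_eq_empty] at h
    have hd : G.degree u = 0 := by
      rw [← G.card_neighborFinset_eq_degree, h]; simp
    have h0 : μ * x u = 0 := by rw [hLu, hd, h]; simp
    nlinarith
  obtain ⟨v, hv, hvmin⟩ := Finset.exists_min_image (G.neighborFinset u) x hNu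
  have hadj : G.Adj u v := (SimpleGraph.mem_neighborFinset _ _ _).1 hv
  have hlt : x v < x u := by
    rcases lt_or_ge (x v) (x u) with h | h
    · exact h
    exfalso
    have heq : ∀ w ∈ G.neighborFinset u, x w = x u :=
      fun w hw => le_antisymm (hu' w) (le_trans h (hvmin w hw))
    rw [Finset.sum_congr rfl heq, Finset.sum_const, nsmul_eq_mul,
      G.card_neighborFinset_eq_degree] at hLu
    nlinarith
  have hLv : μ * x v = G.degree v * x v - ∑ w ∈ G.neighborFinset v, x w := by
    have := congrFun hev v
    rw [SimpleGraph.lapMatrix_mulVec_apply] at this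
    simpa using this.symm
  set A := G.neighborFinset u with hA
  set B := G.neighborFinset v with hB
  set c := x u - x v with hc
  have hcpos : 0 < c := by simp [hc]; linarith
  -- μ * c = ∑_{w∈A}(x u - x w) + ∑_{w∈B}(x w - x v)
  have hkey : μ * c = ∑ w ∈ A, (x u - x w) + ∑ w ∈ B, (x w - x v) := by
    have hdA : (A.card : ℝ) = G.degree u := by
      rw [hA, G.card_neighborFinset_eq_degree]
    have hdB : (B.card : ℝ) = G.degree v := by
      rw [hB, G.card_neighborFinset_eq_degree]
    rw [Finset.sum_sub_distrib, Finset.sum_sub_distrib, Finset.sum_const, Finset.sum_const]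
    simp only [nsmul_eq_mul]
    rw [hc, mul_sub, hLu, hLv]
    rw [← hdA, ← hdB]
    ring
  -- split sums over A ∩ B
  have hsplitA : ∑ w ∈ A, (x u - x w)
      = ∑ w ∈ A \ B, (x u - x w) + ∑ w ∈ A ∩ B, (x u - x w) := by
    rw [← Finset.sum_sdiff (Finset.inter_subset_left (s₂ := B)),
      Finset.sdiff_inter_self_left]
  have hsplitB : ∑ w ∈ B, (x w - x v)
      = ∑ w ∈ B \ A, (x w - x v) + ∑ w ∈ A ∩ B, (x w - x v) := by
    rw [Finset.inter_comm, ← Finset.sum_sdiff (Finset.inter_subset_left (s₂ := A)),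
      Finset.sdiff_inter_self_left]
  have h1 : ∑ w ∈ A \ B, (x u - x w) ≤ (A \ B).card * c := by
    rw [← nsmul_eq_mul, ← Finset.sum_const]
    refine Finset.sum_le_sum fun w hw => ?_
    have : x v ≤ x w := hvmin w (Finset.mem_sdiff.1 hw).1
    simp [hc]; linarith
  have h2 : ∑ w ∈ B \ A, (x w - x v) ≤ (B \ A).card * c := by
    rw [← nsmul_eq_mul, ← Finset.sum_const]
    refine Finset.sum_le_sum fun w hw => ?_
    have : x w ≤ x u := hu' w
    simp [hc]; linarith
  have h3 : ∑ w ∈ A ∩ B, (x u - x w) + ∑ w ∈ A ∩ B, (x w - x v)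
      = (A ∩ B).card * c := by
    rw [← Finset.sum_add_distrib]
    simp [hc, Finset.sum_const, nsmul_eq_mul, mul_sub]
  have hbound : μ * c ≤ ((A \ B).card + (B \ A).card + (A ∩ B).card : ℝ) * c := by
    rw [hkey, hsplitA, hsplitB]
    have := h1; have := h2
    nlinarith [h3]
  have hcards : ((A \ B).card + (B \ A).card + (A ∩ B).card : ℝ)
      = (G.degree u + G.degree v : ℝ) - (A ∩ B).card := by
    have e1 : (A ∩ B).card + (A \ B).card = A.card := Finset.card_inter_add_card_sdiff A B
    have e2 : (B ∩ A).card + (B \ A).card = B.card := Finset.card_inter_add_card_sdiff B A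
    rw [Finset.inter_comm] at e2
    have hdA : A.card = G.degree u := by rw [hA, G.card_neighborFinset_eq_degree]
    have hdB : B.card = G.degree v := by rw [hB, G.card_neighborFinset_eq_degree]
    rw [hdA] at e1; rw [hdB] at e2
    push_cast [← e1, ← e2]
    ring
  have hbound2 : μ * c ≤ ((G.degree u + G.degree v : ℝ) - ((A ∩ B).card : ℝ)) * c := by
    rw [← hcards]; exact hbound
  have hμle : μ ≤ f (u, v) := by
    have h := le_of_mul_le_mul_right hbound2 hcpos
    simpa [hf, hA, hB] using h
  refine le_trans hμle (Finset.le_sup' f ?_)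
  exact Finset.mem_filter.2 ⟨Finset.mem_product.2 ⟨mem_univ _, mem_univ _⟩, hadj⟩

set_option maxHeartbeats 1000000 in
/-- `μ₁(G) ≤ max { d(u) + d(v) − |N(u) ∩ N(v)| : uv ∈ E(G) }` for a graph with at
least one edge (the maximum is taken over all ordered pairs of adjacent vertices,
which is the same as over edges since the quantity is symmetric). -/
theorem maxEig_le_Das_bound {V : Type*} [Fintype V] [DecidableEq V]
    (G : SimpleGraph V) [DecidableRel G.Adj]
    (hE : ((Finset.univ ×ˢ Finset.univ).filter
      (fun p : V × V => G.Adj p.1 p.2)).Nonempty) :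
    lapMu G 1 ≤
      ((Finset.univ ×ˢ Finset.univ).filter (fun p : V × V => G.Adj p.1 p.2)).sup' hE
        (fun p => (G.degree p.1 + G.degree p.2 : ℝ) -
          ((G.neighborFinset p.1 ∩ G.neighborFinset p.2).card : ℝ)) := by
  obtain ⟨p₀, hp₀⟩ := hE
  have : Nonempty V := ⟨p₀.1⟩
  have hlen : (lapEigsAsc G).length = Fintype.card V := by
    rw [lapEigsAsc, Multiset.length_sort, lapEigs, Multiset.card_map]
    simp
  have hpos : 0 < Fintype.card V := Fintype.card_pos
  have hidx : Fintype.card V - 1 < (lapEigsAsc G).length := by omega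
  have hmem : lapMu G 1 ∈ lapEigs G := by
    rw [← Multiset.mem_sort (α := ℝ) (· ≤ ·)]
    have : lapMu G 1 = (lapEigsAsc G)[Fintype.card V - 1] := by
      rw [lapMu, List.getD_eq_getElem _ _ hidx]
    rw [this]
    exact List.getElem_mem hidx
  rw [lapEigs, Multiset.mem_map] at hmem
  obtain ⟨i, -, hi⟩ := hmem
  have hM : (@SimpleGraph.lapMatrix V ℝ _ G
      (fun a b => Classical.propDecidable (G.Adj a b))
      (fun a b => Classical.propDecidable (a = b)) _) = G.lapMatrix ℝ := by congr!
  have hspec : lapMu G 1 ∈ spectrum ℝ (G.lapMatrix ℝ) := by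
    rw [← hi, ← hM]
    apply Matrix.IsHermitian.eigenvalues_mem_spectrum_real
    rw [hM]
    exact (SimpleGraph.posSemidef_lapMatrix ℝ G).1
  rw [← Matrix.spectrum_toEuclideanLin (A := G.lapMatrix ℝ)] at hspec
  have heig := Module.End.HasEigenvalue.of_mem_spectrum hspec
  obtain ⟨w, hw⟩ := heig.exists_hasEigenvector
  have hx : (WithLp.equiv 2 (V → ℝ)) w ≠ 0 := by
    intro h
    exact hw.2 (by simpa using congrArg (WithLp.equiv 2 (V → ℝ)).symm h)
  have hev : G.lapMatrix ℝ *ᵥ (WithLp.equiv 2 (V → ℝ)) w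
      = lapMu G 1 • (WithLp.equiv 2 (V → ℝ)) w := by
    have h := Module.End.mem_eigenspace_iff.1 hw.1
    exact congrArg (WithLp.equiv 2 (V → ℝ)) h
  exact das_key G ⟨p₀, hp₀⟩ _ _ hx hev
end

section
/- Let G be a connected graph of order n with chromatic number χ(G). Then the number of Laplacian eigenvalues of G in the interval (n−1, n] is at most χ(G) − 1. -/
open scoped Classical

section Auxiliary

open Finset Matrix

private lemma pair_sum_sq {n : ℕ} (s : Finset (Fin n)) (x : Fin n → ℝ) :
    ∑ i ∈ s, ∑ j ∈ s, (x i - x j)^2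
      = 2 * s.card * (∑ i ∈ s, (x i)^2) - 2 * (∑ i ∈ s, x i)^2 := by
  have h : ∀ i ∈ s, ∑ j ∈ s, (x i - x j)^2
      = s.card * (x i)^2 + (∑ j ∈ s, (x j)^2) - 2 * (x i * ∑ j ∈ s, x j) := by
    intro i _
    have h2 : ∀ j ∈ s, (x i - x j)^2 = (x i)^2 + ((x j)^2 - 2*(x i * x j)) := fun j _ => by ring
    rw [Finset.sum_congr rfl h2, Finset.sum_add_distrib, Finset.sum_sub_distrib,
      Finset.sum_const, nsmul_eq_mul, ← Finset.mul_sum, ← Finset.mul_sum]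
    ring
  rw [Finset.sum_congr rfl h, Finset.sum_sub_distrib, Finset.sum_add_distrib,
    Finset.sum_const, nsmul_eq_mul, ← Finset.mul_sum, ← Finset.mul_sum, ← Finset.sum_mul]
  ring

private lemma quad_bound {n k : ℕ} (G : SimpleGraph (Fin n)) [DecidableRel G.Adj]
    (C : G.Coloring (Fin k)) (c₀ : Fin k) (x : Fin n → ℝ)
    (hx : ∀ j : Fin k, j ≠ c₀ → ∑ v ∈ Finset.univ.filter (fun v => C v = j), x v = 0) :
    (∑ i : Fin n, ∑ j : Fin n, if G.Adj i j then (x i - x j)^2 else 0)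
      ≤ 2 * ((n : ℝ) - 1) * ∑ v, (x v)^2 := by
  set Q : Fin k → ℝ := fun c => ∑ v ∈ Finset.univ.filter (fun v => C v = c), (x v)^2 with hQ
  set σ : Fin k → ℝ := fun c => ∑ v ∈ Finset.univ.filter (fun v => C v = c), x v with hσ
  set s : Fin k → ℕ := fun c => (Finset.univ.filter (fun v => C v = c)).card with hs
  have hstep1 : (∑ i : Fin n, ∑ j : Fin n, if G.Adj i j then (x i - x j)^2 else 0)
      ≤ ∑ i : Fin n, ∑ j : Fin n, if C i = C j then 0 else (x i - x j)^2 := by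
    refine Finset.sum_le_sum fun i _ => Finset.sum_le_sum fun j _ => ?_
    by_cases h : G.Adj i j
    · simp [h, C.valid h]
    · rw [if_neg h]
      split <;> simp [sq_nonneg]
  have hsplit : ∀ i j : Fin n, (if C i = C j then (0:ℝ) else (x i - x j)^2)
      = (x i - x j)^2 - (if C i = C j then (x i - x j)^2 else 0) := by
    intro i j; split <;> ring
  have hstep2 : (∑ i : Fin n, ∑ j : Fin n, if C i = C j then (0:ℝ) else (x i - x j)^2)
      = (∑ i : Fin n, ∑ j : Fin n, (x i - x j)^2)
        - ∑ i : Fin n, ∑ j : Fin n, (if C i = C j then (x i - x j)^2 else 0) := by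
    simp_rw [hsplit, Finset.sum_sub_distrib]
  have htotal : (∑ i : Fin n, ∑ j : Fin n, (x i - x j)^2)
      = 2 * n * (∑ v, (x v)^2) - 2 * (∑ v, x v)^2 := by
    have := pair_sum_sq Finset.univ x
    simpa using this
  have hsame : (∑ i : Fin n, ∑ j : Fin n, if C i = C j then (x i - x j)^2 else 0)
      = ∑ c : Fin k, (2 * (s c) * Q c - 2 * (σ c)^2) := by
    rw [← Finset.sum_fiberwise Finset.univ (fun i => C i)
      (fun i => ∑ j, if C i = C j then (x i - x j)^2 else 0)]
    refine Finset.sum_congr rfl fun c _ => ?_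
    have hinner : ∀ i ∈ Finset.univ.filter (fun i => C i = c),
        (∑ j, if C i = C j then (x i - x j)^2 else 0)
          = ∑ j ∈ Finset.univ.filter (fun v => C v = c), (x i - x j)^2 := by
      intro i hi
      have hci : C i = c := (Finset.mem_filter.mp hi).2
      rw [Finset.sum_filter]
      exact Finset.sum_congr rfl fun j _ => by rw [hci]; simp [eq_comm]
    rw [Finset.sum_congr rfl hinner, pair_sum_sq]
  have hQsum : ∑ c, Q c = ∑ v, (x v)^2 := Finset.sum_fiberwise _ _ _
  have hσsum : ∑ c, σ c = ∑ v, x v := Finset.sum_fiberwise _ _ _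
  have hxsum : ∑ v, x v = σ c₀ := by
    rw [← hσsum, Finset.sum_eq_single c₀ (fun b _ hb => hx b hb) (by simp)]
  have hσsq : ∑ c, (σ c)^2 = (σ c₀)^2 := by
    refine Finset.sum_eq_single c₀ (fun b _ hb => by simp only [hσ]; rw [hx b hb]; ring) (by simp)
  have hsQ : ∀ c ∈ Finset.univ, Q c ≤ (s c : ℝ) * Q c := by
    intro c _
    rcases Nat.eq_zero_or_pos (s c) with h | h
    · have h0 : (Finset.univ.filter (fun v => C v = c)) = ∅ := Finset.card_eq_zero.mp h
      have : Q c = 0 := by rw [hQ]; simp [h0]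
      rw [this]; simp [h]
    · have h1 : (1:ℝ) ≤ (s c : ℝ) := by exact_mod_cast h
      have hQ0 : (0:ℝ) ≤ Q c := Finset.sum_nonneg fun v _ => sq_nonneg _
      nlinarith
  have hsum_le : ∑ c, Q c ≤ ∑ c, (s c : ℝ) * Q c := Finset.sum_le_sum hsQ
  have hexp : ∑ c : Fin k, (2 * (s c : ℝ) * Q c - 2 * (σ c)^2)
      = 2 * (∑ c, (s c : ℝ) * Q c) - 2 * (∑ c, (σ c)^2) := by
    simp_rw [mul_assoc]
    rw [Finset.sum_sub_distrib, ← Finset.mul_sum, ← Finset.mul_sum]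
  calc (∑ i : Fin n, ∑ j : Fin n, if G.Adj i j then (x i - x j)^2 else 0)
      ≤ ∑ i : Fin n, ∑ j : Fin n, if C i = C j then 0 else (x i - x j)^2 := hstep1
    _ = (2 * n * (∑ v, (x v)^2) - 2 * (∑ v, x v)^2)
        - (2 * (∑ c, (s c : ℝ) * Q c) - 2 * (∑ c, (σ c)^2)) := by
        rw [hstep2, htotal, hsame, hexp]
    _ ≤ 2 * ((n : ℝ) - 1) * ∑ v, (x v)^2 := by
        rw [hxsum, hσsq]
        nlinarith [hsum_le, hQsum]

private lemma card_filter_le {n k : ℕ} [d2 : DecidableEq (Fin n)] (G : SimpleGraph (Fin n))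
    [d1 : DecidableRel G.Adj]
    (hL : (G.lapMatrix ℝ).IsHermitian) (C : G.Coloring (Fin k)) (hk1 : 1 ≤ k) :
    (Finset.univ.filter (fun i => hL.eigenvalues i ∈ Set.Ioc ((n:ℝ)-1) n)).card ≤ k - 1 := by
  by_contra hcon
  push_neg at hcon
  set T := Finset.univ.filter (fun i => hL.eigenvalues i ∈ Set.Ioc ((n:ℝ)-1) n) with hT
  have hm : k ≤ T.card := by omega
  set μ := hL.eigenvalues with hμ
  set b : Fin n → (Fin n → ℝ) := fun i => ⇑(hL.eigenvectorBasis i) with hb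
  have hbb : ∀ i j, b i ⬝ᵥ b j = if i = j then 1 else 0 := by
    intro i j
    have h := orthonormal_iff_ite.mp hL.eigenvectorBasis.orthonormal i j
    simp [PiLp.inner_apply, dotProduct, RCLike.inner_apply, conj_trivial] at h
    rw [← h]
    simp only [dotProduct]
    exact Finset.sum_congr rfl fun v _ => mul_comm _ _
  have heig : ∀ i, G.lapMatrix ℝ *ᵥ b i = μ i • b i := fun i => hL.mulVec_eigenvectorBasis i
  set c₀ : Fin k := ⟨0, hk1⟩ with hc₀
  set F : ({i // i ∈ T} → ℝ) →ₗ[ℝ] ({c : Fin k // c ≠ c₀} → ℝ) :=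
    { toFun := fun c => fun j => ∑ v ∈ Finset.univ.filter (fun v => C v = j.1),
        ∑ i : {i // i ∈ T}, c i * b i.1 v
      map_add' := by
        intro c d; funext j
        simp [add_mul, Finset.sum_add_distrib]
      map_smul' := by
        intro r c; funext j
        simp [Finset.mul_sum, mul_assoc] } with hF
  have hdim : Module.finrank ℝ ({c : Fin k // c ≠ c₀} → ℝ)
      < Module.finrank ℝ ({i // i ∈ T} → ℝ) := by
    rw [Module.finrank_fintype_fun_eq_card, Module.finrank_fintype_fun_eq_card,
      Fintype.card_coe]
    have h1 : Fintype.card {c : Fin k // c ≠ c₀} = k - 1 := by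
      have := Fintype.card_subtype_compl (fun c : Fin k => c = c₀)
      rw [Fintype.card_subtype_eq, Fintype.card_fin] at this
      exact this
    rw [h1]; omega
  have hker := LinearMap.ker_ne_bot_of_finrank_lt (f := F) hdim
  obtain ⟨c, hcker, hc0⟩ := (Submodule.ne_bot_iff _).mp hker
  set x : Fin n → ℝ := fun v => ∑ i : {i // i ∈ T}, c i * b i.1 v with hxdef
  have hFc : F c = 0 := LinearMap.mem_ker.mp hcker
  have hx : ∀ j : Fin k, j ≠ c₀ → ∑ v ∈ Finset.univ.filter (fun v => C v = j), x v = 0 := by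
    intro j hj
    have h := congrFun hFc ⟨j, hj⟩
    simpa [hF, hxdef] using h
  have hpair : ∀ d e : {i // i ∈ T} → ℝ,
      (fun v => ∑ i : {i // i ∈ T}, d i * b i.1 v) ⬝ᵥ
        (fun v => ∑ i : {i // i ∈ T}, e i * b i.1 v)
        = ∑ i : {i // i ∈ T}, d i * e i := by
    intro d e
    simp only [dotProduct]
    have h1 : ∀ v : Fin n, (∑ i : {i // i ∈ T}, d i * b i.1 v)
        * (∑ j : {i // i ∈ T}, e j * b j.1 v)
        = ∑ i : {i // i ∈ T}, ∑ j : {i // i ∈ T}, (d i * e j) * (b i.1 v * b j.1 v) := by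
      intro v
      rw [Finset.sum_mul_sum]
      exact Finset.sum_congr rfl fun i _ => Finset.sum_congr rfl fun j _ => by ring
    simp_rw [h1]
    rw [Finset.sum_comm]
    refine Finset.sum_congr rfl fun i _ => ?_
    rw [Finset.sum_comm]
    have h2 : ∀ j : {i // i ∈ T}, ∑ v : Fin n, (d i * e j) * (b i.1 v * b j.1 v)
        = (d i * e j) * (if i.1 = j.1 then 1 else 0) := by
      intro j
      rw [← Finset.mul_sum, ← hbb i.1 j.1]
      rfl
    rw [Finset.sum_congr rfl fun j _ => h2 j]
    rw [Finset.sum_eq_single i (fun j _ hj => by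
        rw [if_neg (fun hh => hj (Subtype.ext hh.symm))]; ring)
      (by intro h; exact absurd (Finset.mem_univ i) h)]
    simp
  have hxx : x ⬝ᵥ x = ∑ i : {i // i ∈ T}, (c i)^2 := by
    have h := hpair c c
    rw [hxdef]
    simpa [sq] using h
  have hLx : (G.lapMatrix ℝ) *ᵥ x = fun v => ∑ i : {i // i ∈ T}, (μ i.1 * c i) * b i.1 v := by
    funext v
    show ∑ w, G.lapMatrix ℝ v w * x w = _
    simp only [hxdef]
    simp_rw [Finset.mul_sum]
    rw [Finset.sum_comm]
    refine Finset.sum_congr rfl fun i _ => ?_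
    have hv : ∑ w, G.lapMatrix ℝ v w * b i.1 w = (G.lapMatrix ℝ *ᵥ b i.1) v := rfl
    calc ∑ w, G.lapMatrix ℝ v w * (c i * b i.1 w)
        = c i * ∑ w, G.lapMatrix ℝ v w * b i.1 w := by
          rw [Finset.mul_sum]; exact Finset.sum_congr rfl fun w _ => by ring
      _ = c i * (μ i.1 * b i.1 v) := by rw [hv, heig]; simp
      _ = (μ i.1 * c i) * b i.1 v := by ring
  have hQ : x ⬝ᵥ (G.lapMatrix ℝ *ᵥ x) = ∑ i : {i // i ∈ T}, μ i.1 * (c i)^2 := by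
    rw [hLx]
    have h := hpair c (fun i => μ i.1 * c i)
    rw [hxdef]
    rw [h]
    exact Finset.sum_congr rfl fun i _ => by ring
  have hμT : ∀ i : {i // i ∈ T}, (n:ℝ) - 1 < μ i.1 := by
    intro i
    exact (Finset.mem_filter.mp i.2).2.1
  have hcne : ∃ i, c i ≠ 0 := Function.ne_iff.mp hc0
  have hgt : ((n:ℝ) - 1) * (x ⬝ᵥ x) < x ⬝ᵥ (G.lapMatrix ℝ *ᵥ x) := by
    rw [hxx, hQ, Finset.mul_sum]
    obtain ⟨i₀, hi₀⟩ := hcne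
    refine Finset.sum_lt_sum (fun i _ => ?_) ⟨i₀, Finset.mem_univ _, ?_⟩
    · nlinarith [sq_nonneg (c i), hμT i]
    · have h1 : 0 < (c i₀)^2 := by positivity
      nlinarith [hμT i₀]
  have hupper : x ⬝ᵥ (G.lapMatrix ℝ *ᵥ x) ≤ ((n:ℝ) - 1) * (x ⬝ᵥ x) := by
    have h1 : x ⬝ᵥ (G.lapMatrix ℝ *ᵥ x) = Matrix.toLinearMap₂' ℝ (G.lapMatrix ℝ) x x :=
      (Matrix.toLinearMap₂'_apply' _ _ _).symm
    rw [h1, SimpleGraph.lapMatrix_toLinearMap₂']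
    have h2 := quad_bound G C c₀ x hx
    have h3 : x ⬝ᵥ x = ∑ v, (x v)^2 := by
      simp [dotProduct, sq]
    rw [h3]; linarith
  linarith

private lemma lapCount_eq {V : Type*} [Fintype V] (G : SimpleGraph V) (I : Set ℝ) :
    lapCount G I = (Finset.univ.filter
      (fun i => (SimpleGraph.posSemidef_lapMatrix ℝ G).1.eigenvalues i ∈ I)).card := by
  rw [lapCount, lapEigs, Multiset.filter_map, Multiset.card_map]
  exact congrArg Multiset.card (Multiset.filter_congr (fun y _ => Iff.rfl))

end Auxiliary

set_option maxHeartbeats 1000000 in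
/-- For a connected graph `G` of order `n`, the number of Laplacian eigenvalues in
`(n−1, n]` is at most `χ(G) − 1`. -/
theorem lapCount_le_chromaticNumber_sub_one {n : ℕ} (G : SimpleGraph (Fin n))
    (hconn : G.Connected) :
    (lapCount G (Set.Ioc ((n : ℝ) - 1) n) : ℕ∞) ≤ G.chromaticNumber - 1 := by
  have hne : Nonempty (Fin n) := hconn.nonempty
  have hcol := G.colorable_chromaticNumber_of_fintype
  set k := ENat.toNat G.chromaticNumber with hk
  have hχne : G.chromaticNumber ≠ ⊤ :=
    SimpleGraph.chromaticNumber_ne_top_iff_exists.mpr ⟨k, hcol⟩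
  have hχ : G.chromaticNumber = (k : ℕ∞) := (ENat.coe_toNat hχne).symm
  obtain ⟨C⟩ := hcol
  have hk1 : 1 ≤ k := (C (Classical.arbitrary (Fin n))).pos
  have hmain : lapCount G (Set.Ioc ((n:ℝ)-1) n) ≤ k - 1 := by
    rw [lapCount_eq, Finset.filter_congr_decidable]
    exact @card_filter_le n k (fun a b => Classical.propDecidable _) G
      (fun a b => Classical.propDecidable _) _ C hk1
  rw [hχ]
  calc (lapCount G (Set.Ioc ((n : ℝ) - 1) n) : ℕ∞) ≤ ((k - 1 : ℕ) : ℕ∞) := by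
        exact_mod_cast hmain
    _ = (k : ℕ∞) - 1 := (ENat.coe_sub k 1).symm ▸ rfl
end

section
/- Let G be the unicyclic graph U_t obtained from a cycle C_g by joining t ≥ 2 pairwise non-adjacent new vertices to a single vertex of the cycle, so n = g + t. Then the second largest Laplacian eigenvalue satisfies μ₂(G) ≤ t + 3 = n − g + 3. -/
open scoped Classical

/-- `Ut g t` is the unicyclic graph on `g + t` vertices obtained from the cycle `C_g`
(on the vertices `0, …, g−1`) by joining `t` new pairwise non-adjacent pendant vertices
`g, …, g+t−1` to the cycle vertex `0`. -/
def Ut (g t : ℕ) : SimpleGraph (Fin (g + t)) :=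
  SimpleGraph.fromRel fun i j =>
    (∃ hi : (i : ℕ) < g, ∃ hj : (j : ℕ) < g,
      (SimpleGraph.cycleGraph g).Adj ⟨i, hi⟩ ⟨j, hj⟩) ∨
    ((i : ℕ) = 0 ∧ g ≤ (j : ℕ))

open Matrix Finset

/-- If a real symmetric matrix has quadratic form bounded by `c`-times the norm on the
hyperplane `x i₀ = 0`, then at most one eigenvalue can exceed `c`. -/
lemma two_eigs {n : Type*} [Fintype n] [DecidableEq n] {A : Matrix n n ℝ}
    (hA : A.IsHermitian) (c : ℝ) (i₀ : n)
    (h : ∀ x : n → ℝ, x i₀ = 0 → x ⬝ᵥ A *ᵥ x ≤ c * (x ⬝ᵥ x))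
    {i j : n} (hij : i ≠ j) (hci : c < hA.eigenvalues i) :
    hA.eigenvalues j ≤ c := by
  by_contra hcj
  push_neg at hcj
  set v : n → ℝ := ⇑(hA.eigenvectorBasis i) with hv
  set w : n → ℝ := ⇑(hA.eigenvectorBasis j) with hw
  have horth := hA.eigenvectorBasis.orthonormal
  rw [orthonormal_iff_ite] at horth
  have hdot : ∀ k l, (⇑(hA.eigenvectorBasis k) : n → ℝ) ⬝ᵥ ⇑(hA.eigenvectorBasis l)
      = if k = l then 1 else 0 := by
    intro k l
    have := horth k l
    rw [PiLp.inner_apply] at this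
    simpa [dotProduct, mul_comm] using this
  have hvv : v ⬝ᵥ v = 1 := by simpa using hdot i i
  have hww : w ⬝ᵥ w = 1 := by simpa using hdot j j
  have hvw : v ⬝ᵥ w = 0 := by simpa [hij] using hdot i j
  have hwv : w ⬝ᵥ v = 0 := by simpa [hij.symm] using hdot j i
  have hAv : A *ᵥ v = hA.eigenvalues i • v := hA.mulVec_eigenvectorBasis i
  have hAw : A *ᵥ w = hA.eigenvalues j • w := hA.mulVec_eigenvectorBasis j
  obtain ⟨a, b, hab, hx0⟩ : ∃ a b : ℝ, ¬(a = 0 ∧ b = 0) ∧ a * v i₀ + b * w i₀ = 0 := by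
    by_cases hvi : v i₀ = 0
    · exact ⟨1, 0, by simp, by simp [hvi]⟩
    · exact ⟨w i₀, -(v i₀), by simp [hvi], by ring⟩
  set x : n → ℝ := a • v + b • w with hxdef
  have hx : x i₀ = 0 := by simpa [hxdef] using hx0
  have hform : x ⬝ᵥ A *ᵥ x = a^2 * hA.eigenvalues i + b^2 * hA.eigenvalues j := by
    simp only [hxdef, Matrix.mulVec_add, Matrix.mulVec_smul, hAv, hAw,
      dotProduct_add, add_dotProduct, dotProduct_smul,
      smul_dotProduct, smul_eq_mul, hvv, hww, hvw, hwv]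
    ring
  have hnorm : x ⬝ᵥ x = a^2 + b^2 := by
    simp only [hxdef, dotProduct_add, add_dotProduct, dotProduct_smul,
      smul_dotProduct, smul_eq_mul, hvv, hww, hvw, hwv]
    ring
  have hle := h x hx
  rw [hform, hnorm] at hle
  rcases not_and_or.mp hab with ha | hb
  · nlinarith [mul_pos (pow_pos (abs_pos.mpr ha) 2) (sub_pos.mpr hci),
      mul_nonneg (sq_nonneg b) (sub_pos.mpr hcj).le, sq_abs a]
  · nlinarith [mul_pos (pow_pos (abs_pos.mpr hb) 2) (sub_pos.mpr hcj),
      mul_nonneg (sq_nonneg a) (sub_pos.mpr hci).le, sq_abs b]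

/-- Every vertex of `Ut g t` other than the hub `0` has degree at most `2`. -/
lemma Ut_deg_le (g t : ℕ) (hg : 3 ≤ g) (i : Fin (g + t)) (hival : (i : ℕ) ≠ 0) :
    (Finset.univ.filter (fun j => (Ut g t).Adj i j)).card ≤ 2 := by
  haveI : NeZero g := ⟨by omega⟩
  by_cases hig : (i : ℕ) < g
  · set iG : Fin g := ⟨i, hig⟩ with hiG
    set a : Fin (g + t) := Fin.castLE (Nat.le_add_right g t) (iG - 1) with ha
    set b : Fin (g + t) := Fin.castLE (Nat.le_add_right g t) (iG + 1) with hb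
    have h1g : (1 : Fin g).val = 1 := by
      rw [Fin.val_one']; exact Nat.mod_eq_of_lt (by omega)
    have key : ∀ (j : Fin (g + t)) (hj' : (j : ℕ) < g) (hii : (i : ℕ) < g),
        (SimpleGraph.cycleGraph g).Adj ⟨i, hii⟩ ⟨j, hj'⟩ → j = a ∨ j = b := by
      intro j hj' hii hadj
      rw [SimpleGraph.cycleGraph_adj'] at hadj
      rcases hadj with h1 | h1
      · left
        have e1 : (⟨i, hii⟩ - ⟨j, hj'⟩ : Fin g) = 1 := Fin.ext (by rw [h1g]; exact h1)
        have e2 : (⟨j, hj'⟩ : Fin g) = iG - 1 := by rw [← e1]; exact (sub_sub_cancel _ _).symm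
        have := congrArg Fin.val e2
        exact Fin.ext (by simpa [ha] using this)
      · right
        have e1 : (⟨j, hj'⟩ - ⟨i, hii⟩ : Fin g) = 1 := Fin.ext (by rw [h1g]; exact h1)
        have e2 : (⟨j, hj'⟩ : Fin g) = iG + 1 := by rw [← e1]; exact (add_sub_cancel _ _).symm
        have := congrArg Fin.val e2
        exact Fin.ext (by simpa [hb] using this)
    refine le_trans (Finset.card_le_card (fun j hj => ?_))
      ((Finset.card_insert_le a {b}).trans (by simp))
    simp only [mem_filter, mem_univ, true_and] at hj
    rw [Ut, SimpleGraph.fromRel_adj] at hj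
    obtain ⟨hne, hr⟩ := hj
    simp only [mem_insert, mem_singleton]
    rcases hr with (⟨hii, hjj, hadj⟩ | ⟨h0, _⟩) | (⟨hjj, hii, hadj⟩ | ⟨_, hgi⟩)
    · exact key j hjj hii hadj
    · exact absurd h0 hival
    · exact key j hjj hii hadj.symm
    · omega
  · refine le_trans (Finset.card_le_card (fun j hj => ?_))
      (by simp : ({⟨0, by omega⟩} : Finset (Fin (g+t))).card ≤ 2)
    simp only [mem_filter, mem_univ, true_and] at hj
    rw [Ut, SimpleGraph.fromRel_adj] at hj
    obtain ⟨hne, hr⟩ := hj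
    simp only [mem_singleton]
    rcases hr with (⟨hii, _, _⟩ | ⟨hii, _⟩) | (⟨hjj, hii, _⟩ | ⟨hj0, _⟩)
    · exact absurd hii hig
    · exact absurd hii hival
    · exact absurd hii hig
    · exact Fin.ext (by simpa using hj0)

/-- On the hyperplane of vectors vanishing at the hub, the Laplacian quadratic form of
`Ut g t` is at most `4` times the squared norm. -/
lemma Ut_quad (g t : ℕ) (hg : 3 ≤ g) (x : Fin (g + t) → ℝ)
    (hx : ∀ i : Fin (g + t), (i : ℕ) = 0 → x i = 0) :
    x ⬝ᵥ ((Ut g t).lapMatrix ℝ) *ᵥ x ≤ 4 * (x ⬝ᵥ x) := by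
  have h1 : x ⬝ᵥ ((Ut g t).lapMatrix ℝ) *ᵥ x
      = (∑ i, ∑ j, if (Ut g t).Adj i j then (x i - x j)^2 else 0) / 2 := by
    rw [← Matrix.toLinearMap₂'_apply', SimpleGraph.lapMatrix_toLinearMap₂']
  set T : ℝ := ∑ i, ∑ j, if (Ut g t).Adj i j then 2 * x i ^ 2 else 0 with hT
  have step1 : (∑ i, ∑ j, if (Ut g t).Adj i j then (x i - x j)^2 else 0) ≤ T + T := by
    have e1 : (∑ i, ∑ j, if (Ut g t).Adj i j then (x i - x j)^2 else 0)
        ≤ ∑ i, ∑ j, if (Ut g t).Adj i j then 2 * x i ^ 2 + 2 * x j ^ 2 else 0 := by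
      refine Finset.sum_le_sum fun i _ => Finset.sum_le_sum fun j _ => ?_
      split_ifs with h
      · nlinarith [sq_nonneg (x i + x j)]
      · exact le_rfl
    have e2 : (∑ i, ∑ j, if (Ut g t).Adj i j then 2 * x i ^ 2 + 2 * x j ^ 2 else 0)
        = T + (∑ i, ∑ j, if (Ut g t).Adj i j then 2 * x j ^ 2 else 0) := by
      rw [hT, ← Finset.sum_add_distrib]
      refine Finset.sum_congr rfl fun i _ => ?_
      rw [← Finset.sum_add_distrib]
      refine Finset.sum_congr rfl fun j _ => ?_
      split_ifs <;> simp
    have e3 : (∑ i, ∑ j, if (Ut g t).Adj i j then 2 * x j ^ 2 else 0) = T := by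
      rw [Finset.sum_comm, hT]
      refine Finset.sum_congr rfl fun j _ => Finset.sum_congr rfl fun i _ => ?_
      rw [if_congr (SimpleGraph.adj_comm _ i j) rfl rfl]
    rw [e2, e3] at e1
    exact e1
  have step2 : T ≤ ∑ i, 4 * x i ^ 2 := by
    rw [hT]
    refine Finset.sum_le_sum fun i _ => ?_
    have hrow : (∑ j, if (Ut g t).Adj i j then 2 * x i ^ 2 else 0)
        = ((Finset.univ.filter (fun j => (Ut g t).Adj i j)).card : ℝ) * (2 * x i ^ 2) := by
      rw [← Finset.sum_filter, Finset.sum_const, nsmul_eq_mul]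
    rw [hrow]
    by_cases hi0 : (i : ℕ) = 0
    · rw [hx i hi0]; simp
    · have hc := Ut_deg_le g t hg i hi0
      have : ((Finset.univ.filter (fun j => (Ut g t).Adj i j)).card : ℝ) ≤ 2 := by
        exact_mod_cast hc
      nlinarith [sq_nonneg (x i)]
  have hdot : x ⬝ᵥ x = ∑ i, x i ^ 2 := by
    simp [dotProduct, sq]
  have htot : (∑ i, ∑ j, if (Ut g t).Adj i j then (x i - x j)^2 else 0)
      ≤ 8 * ∑ i, x i ^ 2 := by
    calc (∑ i, ∑ j, if (Ut g t).Adj i j then (x i - x j)^2 else 0)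
        ≤ T + T := step1
      _ ≤ (∑ i, 4 * x i ^ 2) + (∑ i, 4 * x i ^ 2) := add_le_add step2 step2
      _ = 8 * ∑ i, x i ^ 2 := by
          rw [Finset.mul_sum, ← Finset.sum_add_distrib]
          exact Finset.sum_congr rfl fun i _ => by ring
  rw [h1, hdot]
  linarith

/-- For `U_t` (`g ≥ 3`, `t ≥ 2`, `n = g + t`), the second largest Laplacian eigenvalue
satisfies `μ₂ ≤ t + 3 = n − g + 3`. -/
theorem Ut_second_eig_le (g t : ℕ) (hg : 3 ≤ g) (ht : 2 ≤ t) :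
    lapMu (Ut g t) 2 ≤ (t : ℝ) + 3 := by
  have hn : 5 ≤ g + t := by omega
  set G := Ut g t with hG
  have hEq : lapEigs G
      = Finset.univ.val.map (SimpleGraph.posSemidef_lapMatrix ℝ G).1.eigenvalues := by
    unfold lapEigs; congr!
  set eig := (SimpleGraph.posSemidef_lapMatrix ℝ G).1.eigenvalues with heig
  set l := lapEigsAsc G with hl
  have hlen : l.length = g + t := by
    rw [hl, lapEigsAsc, Multiset.length_sort, lapEigs, Multiset.card_map]
    simp
  have hsort : l.Pairwise (· ≤ ·) := Multiset.pairwise_sort _ _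
  have hquad : ∀ x : Fin (g + t) → ℝ, x ⟨0, by omega⟩ = 0 →
      x ⬝ᵥ (G.lapMatrix ℝ) *ᵥ x ≤ 4 * (x ⬝ᵥ x) := by
    intro x hx
    exact Ut_quad g t hg x (fun kk hk => by
      have : kk = (⟨0, by omega⟩ : Fin (g+t)) := Fin.ext (by simpa using hk)
      rw [this]; exact hx)
  -- at most one eigenvalue exceeds 4
  have hS : (Finset.univ.filter (fun i => (4:ℝ) < eig i)).card ≤ 1 := by
    by_contra hcard
    push_neg at hcard
    obtain ⟨i, hi, j, hj, hij⟩ := Finset.one_lt_card.mp hcard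
    simp only [mem_filter, mem_univ, true_and] at hi hj
    exact absurd hj (not_lt.mpr
      (two_eigs (SimpleGraph.posSemidef_lapMatrix ℝ G).1 4 (⟨0, by omega⟩ : Fin (g+t))
        hquad hij hi))
  have hS' : Multiset.countP (fun y => (4:ℝ) < y) (lapEigs G) ≤ 1 := by
    rw [hEq, Multiset.countP_eq_card_filter, Multiset.filter_map, Multiset.card_map,
        ← Finset.filter_val, ← Finset.card_def]
    simpa [Function.comp] using hS
  -- suppose lapMu > 4
  suffices h4 : lapMu G 2 ≤ 4 by
    have h2 : (2:ℝ) ≤ (t:ℝ) := by exact_mod_cast ht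
    linarith
  by_contra h4
  push_neg at h4
  set k := g + t - 2 with hk
  have hkl : k < l.length := by omega
  have hmu : lapMu G 2 = l[k] := by
    rw [lapMu, ← hl, Fintype.card_fin]
    exact List.getD_eq_getElem l 0 (by omega)
  have hdropall : ∀ y ∈ l.drop k, (4:ℝ) < y := by
    intro y hy
    rw [List.mem_iff_getElem] at hy
    obtain ⟨m, hm, rfl⟩ := hy
    have hm2 : k + m < l.length := by rw [List.length_drop] at hm; omega
    rw [List.getElem_drop]
    rcases Nat.eq_zero_or_pos m with rfl | hmpos
    · simpa [hmu] using h4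
    · have hrel : l[k] ≤ l[k + m] :=
        List.pairwise_iff_getElem.mp hsort k (k + m) (by omega) (by omega) (by omega)
      calc (4:ℝ) < l[k] := by rw [← hmu]; exact h4
        _ ≤ l[k + m] := hrel
  have hcount : 2 ≤ l.countP (fun y => decide ((4:ℝ) < y)) := by
    have hfil : (l.drop k).filter (fun y => decide ((4:ℝ) < y)) = l.drop k :=
      List.filter_eq_self.mpr (fun a ha => decide_eq_true (hdropall a ha))
    have hsub : ((l.drop k).filter (fun y => decide ((4:ℝ) < y))).length
        ≤ (l.filter (fun y => decide ((4:ℝ) < y))).length :=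
      ((List.drop_sublist k l).filter _).length_le
    rw [hfil, List.length_drop, hlen] at hsub
    rw [List.countP_eq_length_filter]
    omega
  have hcoe : (↑l : Multiset ℝ) = lapEigs G := by
    rw [hl, lapEigsAsc]; exact Multiset.sort_eq _ _
  have hfin : l.countP (fun y => decide ((4:ℝ) < y))
      = Multiset.countP (fun y => (4:ℝ) < y) (lapEigs G) := by
    rw [← hcoe]
    simp [Multiset.coe_countP]
  omega
end
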